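/- For any t ∈ ℝ and ω > 0, the integral ∫_{-∞}^{∞} e^{-i p t} / (p² + ω²) dp equals (π/ω) e^{-|t| ω}. -/

import Mathlib

open MeasureTheory Complex

open Real Set Filter
open scoped FourierTransform


lemma integrableOn_cexp_neg_mul_Ioi {c : ℂ} (hc : 0 < c.re) :
    IntegrableOn (fun x : ℝ => Complex.exp (-(c * x))) (Ioi 0) := by
  apply Integrable.mono' (exp_neg_integrableOn_Ioi 0 hc)
  · exact (Complex.continuous_exp.comp (by fun_prop)).aestronglyMeasurable
  · filter_upwards with x
    rw [Complex.norm_exp]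
    simp [neg_mul]

lemma integral_cexp_neg_mul_Ioi {c : ℂ} (hc : 0 < c.re) :
    ∫ x : ℝ in Ioi 0, Complex.exp (-(c * x)) = 1 / c := by
  have hc0 : c ≠ 0 := fun h => by simp [h] at hc
  have hder : ∀ x ∈ Ioi (0:ℝ),
      HasDerivAt (fun x : ℝ => -(1/c) * Complex.exp (-(c * x)))
        (Complex.exp (-(c * x))) x := by
    intro x _
    have h1 : HasDerivAt (fun x : ℝ => ((x : ℂ))) 1 x := Complex.ofRealCLM.hasDerivAt
    have h2 := (h1.const_mul (-c)).cexp.const_mul (-(1/c))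
    simp only [neg_mul] at h2
    convert h2 using 1
    · rfl
    · funext y; ring
    · rw [mul_one, mul_comm (cexp _), ← mul_assoc]
      field_simp
  have htend : Tendsto (fun x : ℝ => -(1/c) * Complex.exp (-(c * x))) atTop (nhds 0) := by
    rw [← mul_zero (-(1/c))]
    apply Tendsto.const_mul
    rw [tendsto_zero_iff_norm_tendsto_zero]
    have : (fun x : ℝ => ‖Complex.exp (-(c * x))‖) = fun x : ℝ => Real.exp (-(c.re * x)) := by
      ext x; rw [Complex.norm_exp]; simp [neg_mul]
    rw [this]
    have h1 : Tendsto (fun x : ℝ => c.re * x) atTop atTop :=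
      (tendsto_const_mul_atTop_of_pos hc).mpr tendsto_id
    have h2 : Tendsto (fun x : ℝ => -(c.re * x)) atTop atBot := tendsto_neg_atBot_iff.mpr h1
    have h3 := Real.tendsto_exp_atBot.comp h2
    simp only [Function.comp_def] at h3
    exact h3
  have hcont : ContinuousWithinAt (fun x : ℝ => -(1/c) * Complex.exp (-(c * x))) (Ici 0) 0 :=
    (Continuous.continuousWithinAt (by fun_prop))
  have := integral_Ioi_of_hasDerivAt_of_tendsto hcont hder (integrableOn_cexp_neg_mul_Ioi hc) htend
  rw [this]
  simp

lemma integrable_exp_neg_abs_real {a : ℝ} (ha : 0 < a) :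
    Integrable (fun x : ℝ => Real.exp (-(a * |x|))) := by
  have hIoi : IntegrableOn (fun x : ℝ => Real.exp (-(a * |x|))) (Ioi 0) := by
    apply (exp_neg_integrableOn_Ioi 0 ha).congr_fun _ measurableSet_Ioi
    intro x hx
    simp only [abs_of_pos (show (0:ℝ) < x from hx), neg_mul]
  have hIic : IntegrableOn (fun x : ℝ => Real.exp (-(a * |x|))) (Iic 0) := by
    have A : MeasurableEmbedding fun x : ℝ => -x :=
      (Homeomorph.neg ℝ).isClosedEmbedding.measurableEmbedding
    have : IntegrableOn ((fun x : ℝ => Real.exp (-(a * |x|))) ∘ fun x : ℝ => -x)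
        ((fun x : ℝ => -x) ⁻¹' (Iic 0)) := by
      simp only [Function.comp_def, abs_neg]
      have : (fun x : ℝ => -x) ⁻¹' (Iic 0) = Ici 0 := by ext x; simp
      rw [this]
      exact Iff.mpr integrableOn_Ici_iff_integrableOn_Ioi hIoi
    have h2 := (A.integrableOn_map_iff (f := fun x : ℝ => Real.exp (-(a * |x|)))
      (μ := (volume : Measure ℝ)) (s := Iic 0)).mpr this
    rwa [Measure.map_neg_eq_self (volume : Measure ℝ)] at h2
  rw [← integrableOn_univ, ← Set.Iic_union_Ioi (a := (0:ℝ))]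
  exact hIic.union hIoi

lemma integral_char_exp {a : ℝ} (ha : 0 < a) (ξ : ℝ) :
    ∫ x : ℝ, Complex.exp (↑(-2 * π * x * ξ) * Complex.I) * (Real.exp (-(a * |x|)) : ℂ)
      = ((2 * a / (a ^ 2 + (2 * π * ξ) ^ 2) : ℝ) : ℂ) := by
  set F : ℝ → ℂ := fun x =>
    Complex.exp (↑(-2 * π * x * ξ) * Complex.I) * (Real.exp (-(a * |x|)) : ℂ) with hFdef
  set c₁ : ℂ := a + 2 * π * ξ * Complex.I with hc₁def
  set c₂ : ℂ := a - 2 * π * ξ * Complex.I with hc₂def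
  have h1re : 0 < c₁.re := by simp [hc₁def, ha]
  have h2re : 0 < c₂.re := by simp [hc₂def, ha]
  have hc₁ : c₁ ≠ 0 := fun h => by simp [h] at h1re
  have hc₂ : c₂ ≠ 0 := fun h => by simp [h] at h2re
  have hF : Integrable F := by
    apply Integrable.bdd_mul (c := 1) ((integrable_exp_neg_abs_real ha).ofReal)
    · exact (Complex.continuous_exp.comp (by fun_prop)).aestronglyMeasurable
    · filter_upwards with x
      rw [Complex.norm_exp]
      simp
  have hIoi : ∫ x in Ioi (0:ℝ), F x = 1 / c₁ := by
    rw [← integral_cexp_neg_mul_Ioi h1re]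
    apply setIntegral_congr_fun measurableSet_Ioi
    intro x hx
    rw [hFdef]
    simp only
    rw [abs_of_pos hx, Complex.ofReal_exp, ← Complex.exp_add]
    congr 1
    rw [hc₁def]
    push_cast
    ring
  have hIic : ∫ x in Iic (0:ℝ), F x = 1 / c₂ := by
    have hneg := integral_comp_neg_Ioi (0:ℝ) F
    rw [neg_zero] at hneg
    rw [← hneg, ← integral_cexp_neg_mul_Ioi h2re]
    apply setIntegral_congr_fun measurableSet_Ioi
    intro x hx
    rw [hFdef]
    simp only [abs_neg]
    rw [abs_of_pos hx, Complex.ofReal_exp, ← Complex.exp_add]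
    congr 1
    rw [hc₂def]
    push_cast
    ring
  rw [← intervalIntegral.integral_Iic_add_Ioi hF.integrableOn hF.integrableOn, hIic, hIoi,
    div_add_div _ _ hc₂ hc₁]
  have hnum : c₂ + c₁ = ((2 * a : ℝ) : ℂ) := by rw [hc₁def, hc₂def]; push_cast; ring
  have hden : c₂ * c₁ = ((a ^ 2 + (2 * π * ξ) ^ 2 : ℝ) : ℂ) := by
    rw [hc₁def, hc₂def]
    push_cast
    ring_nf
    rw [Complex.I_sq]
    ring
  rw [one_mul, mul_one, add_comm c₁ c₂] at *
  rw [hnum, hden, Complex.ofReal_div]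

/-- For any `t ∈ ℝ` and `ω > 0`,
`∫ p, exp (-i p t) / (p² + ω²) dp = (π / ω) · exp (-|t| ω)`. -/
theorem integral_exp_neg_mul_I_div_sq_add_sq (t ω : ℝ) (hω : 0 < ω) :
    ∫ p : ℝ, Complex.exp (-(Complex.I * p * t)) / ((p : ℂ) ^ 2 + (ω : ℂ) ^ 2) =
      ((Real.pi / ω) * Real.exp (-(|t| * ω)) : ℝ) := by
  set g : ℝ → ℂ := fun x => (Real.exp (-(ω * |x|)) : ℂ) with hgdef
  have hg_cont : Continuous g := by
    apply Complex.continuous_ofReal.comp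
    fun_prop
  have hg_int : Integrable g := (integrable_exp_neg_abs_real hω).ofReal
  have hFg : 𝓕 g = fun ξ : ℝ => ((2 * ω / (ω ^ 2 + (2 * π * ξ) ^ 2) : ℝ) : ℂ) := by
    funext ξ
    rw [Real.fourier_real_eq_integral_exp_smul]
    simp_rw [smul_eq_mul]
    exact integral_char_exp hω ξ
  have hFg_int : Integrable (𝓕 g) := by
    rw [hFg]
    apply Integrable.ofReal
    have h2πω : (2 * π / ω) ≠ 0 := by positivity
    have h1 := (integrable_inv_one_add_sq.comp_mul_left' h2πω).const_mul (2 / ω)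
    apply h1.congr
    filter_upwards with ξ
    have hden : ω ^ 2 + (2 * π * ξ) ^ 2 ≠ 0 := by positivity
    have h1den : 1 + (2 * π / ω * ξ) ^ 2 ≠ 0 := by positivity
    have hωne : ω ≠ 0 := hω.ne'
    show 2 / ω * (1 + (2 * π / ω * ξ) ^ 2)⁻¹ = 2 * ω / (ω ^ 2 + (2 * π * ξ) ^ 2)
    rw [eq_div_iff hden]
    field_simp
  have hinv := hg_int.fourierInv_fourier_eq hFg_int (hg_cont.continuousAt (x := -t))
  rw [Real.fourierInv_eq_fourier_neg, neg_neg] at hinv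
  -- hinv : 𝓕 (𝓕 g) t = g (-t)
  have hval : 𝓕 (𝓕 g) t = ∫ x : ℝ, Complex.exp (↑(-2 * π * x * t) * Complex.I) *
      ((2 * ω / (ω ^ 2 + (2 * π * x) ^ 2) : ℝ) : ℂ) := by
    rw [Real.fourier_real_eq_integral_exp_smul, hFg]
    simp_rw [smul_eq_mul]
  set f : ℝ → ℂ := fun p => Complex.exp (-(Complex.I * p * t)) / ((p : ℂ) ^ 2 + (ω : ℂ) ^ 2)
    with hfdef
  have hsub := MeasureTheory.Measure.integral_comp_mul_left f (2 * π)
  have hpi : |(2 * π)⁻¹| = (2 * π)⁻¹ := abs_of_pos (by positivity)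
  have hcomp : (fun x : ℝ => f (2 * π * x)) = fun x : ℝ =>
      ((1 / (2 * ω) : ℝ) : ℂ) * (Complex.exp (↑(-2 * π * x * t) * Complex.I) *
        ((2 * ω / (ω ^ 2 + (2 * π * x) ^ 2) : ℝ) : ℂ)) := by
    funext x
    rw [hfdef]
    simp only
    have hden : ((2 * π * x : ℝ) : ℂ) ^ 2 + (ω : ℂ) ^ 2 =
        ((ω ^ 2 + (2 * π * x) ^ 2 : ℝ) : ℂ) := by push_cast; ring
    rw [hden]
    have hdenne : ((ω ^ 2 + (2 * π * x) ^ 2 : ℝ) : ℂ) ≠ 0 := by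
      rw [Ne, Complex.ofReal_eq_zero]
      positivity
    have hexp : Complex.exp (-(Complex.I * ((2 * π * x : ℝ) : ℂ) * t)) =
        Complex.exp (↑(-2 * π * x * t) * Complex.I) := by
      congr 1
      push_cast
      ring
    rw [hexp]
    rw [div_eq_iff hdenne]
    have hkey : ((1 / (2 * ω) : ℝ) : ℂ) * ((2 * ω / (ω ^ 2 + (2 * π * x) ^ 2) : ℝ) : ℂ) *
        ((ω ^ 2 + (2 * π * x) ^ 2 : ℝ) : ℂ) = 1 := by
      rw [← Complex.ofReal_mul, ← Complex.ofReal_mul, ← Complex.ofReal_one]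
      congr 1
      have hD : ω ^ 2 + (2 * π * x) ^ 2 ≠ 0 := by positivity
      field_simp
    linear_combination (-Complex.exp (↑(-2 * π * x * t) * Complex.I)) * hkey
  have hstep : ∫ x : ℝ, f (2 * π * x) = ((1 / (2 * ω) : ℝ) : ℂ) * g (-t) := by
    rw [hcomp, integral_const_mul, ← hval, hinv]
  have h2π : (0:ℝ) < 2 * π := by positivity
  have hgoal : (∫ p : ℝ, f p) = (2 * π : ℝ) • ∫ x : ℝ, f (2 * π * x) := by
    rw [hsub, hpi, smul_smul, mul_inv_cancel₀ h2π.ne', one_smul]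
  rw [show (∫ p : ℝ, Complex.exp (-(Complex.I * p * t)) / ((p : ℂ) ^ 2 + (ω : ℂ) ^ 2))
    = ∫ p : ℝ, f p from rfl, hgoal, hstep, hgdef]
  simp only [abs_neg]
  rw [Complex.real_smul, ← Complex.ofReal_mul, ← Complex.ofReal_mul]
  congr 1
  rw [mul_comm ω |t|]
  field_simp
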